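/- Let b ∈ (0,1] and β₁, β₂ > 0. Then the function t ↦ (β₁t^{1/b} + β₂)^b is convex on ℝ₊. -/

import Mathlib

open Real

lemma minkowski2 {p u v w z : ℝ} (hp : 1 ≤ p) (hu : 0 ≤ u) (hv : 0 ≤ v) (hw : 0 ≤ w)
    (hz : 0 ≤ z) :
    ((u + w) ^ p + (v + z) ^ p) ^ (1 / p) ≤
      (u ^ p + v ^ p) ^ (1 / p) + (w ^ p + z ^ p) ^ (1 / p) := by
  have h := Real.Lp_add_le_of_nonneg (s := (Finset.univ : Finset (Fin 2)))
    (f := ![u, v]) (g := ![w, z]) (p := p) hp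
    (by intro i _; fin_cases i <;> simpa) (by intro i _; fin_cases i <;> simpa)
  simpa [Fin.sum_univ_two] using h

theorem stmt_10 (b β₁ β₂ : ℝ) (hb0 : 0 < b) (hb1 : b ≤ 1) (hβ₁ : 0 < β₁) (hβ₂ : 0 < β₂) :
    ConvexOn ℝ (Set.Ioi 0) (fun t : ℝ => (β₁ * t ^ (1 / b) + β₂) ^ b) := by
  set p := 1 / b with hpdef
  have hp1 : 1 ≤ p := by
    rw [hpdef]
    exact (one_le_one_div hb0 hb1)
  have hp0 : 0 < p := lt_of_lt_of_le one_pos hp1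
  have hbp : b * p = 1 := by rw [hpdef]; field_simp
  have hpb : p * b = 1 := by rw [mul_comm]; exact hbp
  have h1p : 1 / p = b := by
    rw [hpdef]; field_simp
  have key : ∀ t : ℝ, 0 ≤ t → β₁ * t ^ p + β₂ = (β₁ ^ b * t) ^ p + (β₂ ^ b) ^ p := by
    intro t ht
    rw [Real.mul_rpow (Real.rpow_nonneg hβ₁.le b) ht, ← Real.rpow_mul hβ₁.le,
      ← Real.rpow_mul hβ₂.le, hbp, Real.rpow_one, Real.rpow_one]
  have factor : ∀ a u v : ℝ, 0 ≤ a → 0 ≤ u → 0 ≤ v →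
      ((a * u) ^ p + (a * v) ^ p) ^ b = a * (u ^ p + v ^ p) ^ b := by
    intro a u v ha hu hv
    rw [Real.mul_rpow ha hu, Real.mul_rpow ha hv, ← mul_add,
      Real.mul_rpow (Real.rpow_nonneg ha p) (by positivity),
      ← Real.rpow_mul ha, hpb, Real.rpow_one]
  constructor
  · exact convex_Ioi 0
  · intro x hx y hy a c ha hc hac
    simp only [smul_eq_mul]
    have hx' : (0:ℝ) < x := hx
    have hy' : (0:ℝ) < y := hy
    have hβ₁b : (0:ℝ) ≤ β₁ ^ b := Real.rpow_nonneg hβ₁.le b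
    have hβ₂b : (0:ℝ) ≤ β₂ ^ b := Real.rpow_nonneg hβ₂.le b
    have mink := minkowski2 (p := p) (u := a * (β₁ ^ b * x)) (v := a * (β₂ ^ b))
      (w := c * (β₁ ^ b * y)) (z := c * (β₂ ^ b)) hp1
      (by positivity) (by positivity) (by positivity) (by positivity)
    rw [h1p, factor a (β₁ ^ b * x) (β₂ ^ b) ha (by positivity) hβ₂b, factor c (β₁ ^ b * y) (β₂ ^ b) hc (by positivity) hβ₂b] at mink
    have e1 : a * (β₁ ^ b * x) + c * (β₁ ^ b * y) = β₁ ^ b * (a * x + c * y) := by ring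
    have e2 : a * β₂ ^ b + c * β₂ ^ b = β₂ ^ b := by rw [← add_mul, hac, one_mul]
    rw [e1, e2] at mink
    rw [key _ (by positivity), key _ hx'.le, key _ hy'.le]
    exact mink
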